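/- Let 𝔽 be ℝ or ℂ, X a Banach space over 𝔽 with dim X ≥ 2, and 𝒜 a standard operator algebra in B(X). Let Φ : 𝒜 → 𝒜 be a surjective strong 3-commutativity preserving map and P ∈ 𝒜 a nontrivial idempotent (P² = P, P ≠ 0, P ≠ I). Then P·Φ(P)·(I − P) = 0 and (I − P)·Φ(P)·P = 0. -/

import Mathlib

set_option synthInstance.maxHeartbeats 400000
set_option maxHeartbeats 1000000

/-- The commutator `[A,B] = AB - BA` in a ring. -/
def bracket1 {R : Type*} [Ring R] (A B : R) : R := A * B - B * A

/-- The 3-commutator `[A,B]₃ = [[[A,B],B],B]` in a ring. -/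
def bracket3 {R : Type*} [Ring R] (A B : R) : R := bracket1 (bracket1 (bracket1 A B) B) B

/-- A standard operator algebra on a normed space `X` over `𝕜` is a subalgebra of
`B(X)` (automatically containing the identity) containing all finite-rank operators. -/
def IsStandardOperatorAlgebra (𝕜 : Type*) [RCLike 𝕜] (X : Type*)
    [NormedAddCommGroup X] [NormedSpace 𝕜 X]
    (𝒜 : Subalgebra 𝕜 (X →L[𝕜] X)) : Prop :=
  ∀ T : X →L[𝕜] X, FiniteDimensional 𝕜 (LinearMap.range (T : X →ₗ[𝕜] X)) → T ∈ 𝒜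

section Tools
variable {𝕜 X : Type*} [RCLike 𝕜] [NormedAddCommGroup X] [NormedSpace 𝕜 X]

lemma opext (M : X →L[𝕜] X) (h : ∀ (g : X →L[𝕜] 𝕜) (z : X), g (M z) = 0) : M = 0 := by
  ext z
  by_contra hz
  obtain ⟨g, hg⟩ := SeparatingDual.exists_eq_one (R := 𝕜) hz
  simp [h g z] at hg

lemma opeq {M N : X →L[𝕜] X} (h : ∀ (g : X →L[𝕜] 𝕜) (z : X), g (M z) = g (N z)) : M = N := by
  have h0 : M - N = 0 := opext _ (fun g z => by
    simp only [ContinuousLinearMap.sub_apply, map_sub, h g z, sub_self])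
  exact sub_eq_zero.mp h0

lemma opex (M : X →L[𝕜] X) (hM : M ≠ 0) : ∃ (z : X) (g : X →L[𝕜] 𝕜), g (M z) = 1 := by
  have : ∃ z, M z ≠ 0 := by
    by_contra hz
    push_neg at hz
    exact hM (by ext z; simpa using hz z)
  obtain ⟨z, hz⟩ := this
  obtain ⟨g, hg⟩ := SeparatingDual.exists_eq_one (R := 𝕜) hz
  exact ⟨z, g, hg⟩

lemma smul_cancel {V : Type*} [AddCommGroup V] [Module 𝕜 V] [NoZeroSMulDivisors 𝕜 V]
    {v : V} (hv : v ≠ 0) {s t : 𝕜} (h : s • v = t • v) : s = t := by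
  have h0 : (s - t) • v = 0 := by rw [sub_smul, h, sub_self]
  rcases smul_eq_zero.mp h0 with h1 | h1
  · exact sub_eq_zero.mp h1
  · exact absurd h1 hv

lemma quadId (Q : X →L[𝕜] X) (lam : 𝕜) (h : Q*Q = lam•Q - (lam^2/4)•(1 : X →L[𝕜] X)) :
    ∃ μ : 𝕜, (Q - μ•(1 : X →L[𝕜] X))*(Q - μ•1) = 0 := by
  refine ⟨lam/2, ?_⟩
  have e : (Q - (lam/2)•(1 : X →L[𝕜] X))*(Q - (lam/2)•1)
      = Q*Q - (lam/2)•Q - (lam/2)•Q + ((lam/2)*(lam/2))•1 := by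
    simp only [mul_sub, sub_mul, smul_mul_assoc, mul_smul_comm, one_mul, mul_one]
    module
  rw [e, h]
  have h4 : lam^2/4 = (lam/2)*(lam/2) := by ring
  rw [h4]
  module

end Tools

section Core
variable {𝕜 X : Type*} [RCLike 𝕜] [NormedAddCommGroup X] [NormedSpace 𝕜 X]

lemma core (p pb Q : X →L[𝕜] X) (hsum : p + pb = 1)
    (hp : p*p = p) (hpb : pb*pb = pb) (hp0 : p ≠ 0) (hpb0 : pb ≠ 0)
    (famI : ∀ (g h : X →L[𝕜] 𝕜) (z x : X),
      g ((pb*Q^2*p) z) * h ((p*Q*pb) x) = g ((pb*Q*p) z) * h ((p*Q^2*pb) x))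
    (famII : ∀ (g h : X →L[𝕜] 𝕜) (z x : X),
      g ((p*Q^2*pb) z) * h ((pb*Q*p) x) = g ((p*Q*pb) z) * h ((pb*Q^2*p) x))
    (famIII : ∀ (g h : X →L[𝕜] 𝕜) (z x : X),
      g ((pb*Q^3*p) z) * h (p x)
        = 3*(g ((pb*Q^2*p) z) * h ((p*Q*p) x)) - 3*(g ((pb*Q*p) z) * h ((p*Q^2*p) x)))
    (famIV : ∀ (g h : X →L[𝕜] 𝕜) (z x : X),
      g ((p*Q^3*pb) z) * h (pb x)
        = 3*(g ((p*Q^2*pb) z) * h ((pb*Q*pb) x)) - 3*(g ((p*Q*pb) z) * h ((pb*Q^2*pb) x)))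
    (famVI : ∀ (g h : X →L[𝕜] 𝕜) (z x : X),
      3*(g ((p*Q*p) z) * h ((p*Q^2*pb) x))
        = 3*(g ((p*Q^2*p) z) * h ((p*Q*pb) x)) + g (p z) * h ((p*Q^3*pb) x))
    (hb : p*Q*pb ≠ 0) :
    ∃ μ : 𝕜, (Q - μ•(1 : X →L[𝕜] X))*(Q - μ•1) = 0 := by
  set a := p*Q*p with ha_def
  set b := p*Q*pb with hb_def
  set c := pb*Q*p with hc_def
  set d := pb*Q*pb with hd_def
  set a2 := p*Q^2*p with ha2_def
  set b2 := p*Q^2*pb with hb2_def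
  set c2 := pb*Q^2*p with hc2_def
  set d2 := pb*Q^2*pb with hd2_def
  set b3 := p*Q^3*pb with hb3_def
  set c3 := pb*Q^3*p with hc3_def
  -- idempotent helpers
  have hp2 : ∀ x : X →L[𝕜] X, p*(p*x) = p*x := fun x => by rw [← mul_assoc, hp]
  have hpb2 : ∀ x : X →L[𝕜] X, pb*(pb*x) = pb*x := fun x => by rw [← mul_assoc, hpb]
  have key2 : ∀ w : X →L[𝕜] X, p*w + pb*w = w := fun w => by
    rw [← add_mul, hsum, one_mul]
  have key2' : ∀ w : X →L[𝕜] X, w*p + w*pb = w := fun w => by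
    rw [← mul_add, hsum, mul_one]
  -- absorption lemmas
  have Wpb : p*b = b := by rw [hb_def, ← mul_assoc, ← mul_assoc, hp]
  have Wbpb : b*pb = b := by rw [hb_def, mul_assoc, mul_assoc, hpb, ← mul_assoc]
  have Wpbc : pb*c = c := by rw [hc_def, ← mul_assoc, ← mul_assoc, hpb]
  have Wcp : c*p = c := by rw [hc_def, mul_assoc, mul_assoc, hp, ← mul_assoc]
  -- word identities
  have W1 : a2 = a*a + b*c := by
    rw [ha2_def, ha_def, hb_def, hc_def]
    simp only [mul_assoc, hp2, hpb2, pow_two]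
    rw [← mul_add, ← mul_add, key2]
  have W2 : b2 = a*b + b*d := by
    rw [hb2_def, ha_def, hb_def, hd_def]
    simp only [mul_assoc, hp2, hpb2, pow_two]
    rw [← mul_add, ← mul_add, key2]
  have W3 : c2 = c*a + d*c := by
    rw [hc2_def, ha_def, hc_def, hd_def]
    simp only [mul_assoc, hp2, hpb2, pow_two]
    rw [← mul_add, ← mul_add, key2]
  have W4 : d2 = c*b + d*d := by
    rw [hd2_def, hb_def, hc_def, hd_def]
    simp only [mul_assoc, hp2, hpb2, pow_two]
    rw [← mul_add, ← mul_add, key2]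
  have WB3 : b3 = a2*b + b2*d := by
    rw [hb3_def, ha2_def, hb_def, hb2_def, hd_def]
    simp only [mul_assoc, hp2, hpb2, pow_succ, pow_zero, one_mul]
    rw [← mul_add, ← mul_add, ← mul_add, key2]
  have WC3 : c3 = c2*a + d2*c := by
    rw [hc3_def, hc2_def, ha_def, hd2_def, hc_def]
    simp only [mul_assoc, hp2, hpb2, pow_succ, pow_zero, one_mul]
    rw [← mul_add, ← mul_add, ← mul_add, key2]
  have WB3' : b3 = a*b2 + b*d2 := by
    rw [hb3_def, ha_def, hb2_def, hb_def, hd2_def]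
    simp only [mul_assoc, hp2, hpb2, pow_succ, pow_zero, one_mul]
    rw [← mul_add, ← mul_add, key2]
  have WQ : Q = a + b + c + d := by
    rw [ha_def, hb_def, hc_def, hd_def]
    calc Q = p*Q + pb*Q := (key2 Q).symm
      _ = p*(Q*p + Q*pb) + pb*(Q*p + Q*pb) := by rw [key2' Q]
      _ = p*Q*p + p*Q*pb + pb*Q*p + pb*Q*pb := by
          simp only [mul_add, ← mul_assoc]; abel
  have WQ2 : Q*Q = a2 + b2 + c2 + d2 := by
    rw [ha2_def, hb2_def, hc2_def, hd2_def, ← pow_two]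
    calc Q^2 = p*Q^2 + pb*Q^2 := (key2 _).symm
      _ = p*(Q^2*p + Q^2*pb) + pb*(Q^2*p + Q^2*pb) := by rw [key2' (Q^2)]
      _ = p*Q^2*p + p*Q^2*pb + pb*Q^2*p + pb*Q^2*pb := by
          simp only [mul_add, ← mul_assoc]; abel
  clear ha_def hb_def hc_def hd_def ha2_def hb2_def hc2_def hd2_def hb3_def hc3_def
  obtain ⟨zb, gb, hgb⟩ := opex b hb
  by_cases hc : c = 0
  · -- c = 0 branch
    have hc2 : c2 = 0 := by rw [W3, hc, zero_mul, mul_zero, add_zero]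
    have ha2 : a2 = a*a := by rw [W1, hc, mul_zero, add_zero]
    have hd2 : d2 = d*d := by rw [W4, hc, zero_mul, zero_add]
    have VIstar : ∀ (h : X →L[𝕜] 𝕜) (x : X),
        (3*h (b2 x))•a = (3*h (b x))•a2 + (h (b3 x))•p := by
      intro h x
      apply opeq; intro g z
      have hf := famVI g h z x
      simp only [ContinuousLinearMap.smul_apply, ContinuousLinearMap.add_apply,
        map_smul, map_add, smul_eq_mul]
      linear_combination hf
    have IVstar : ∀ (g : X →L[𝕜] 𝕜) (z : X),
        (g (b3 z))•pb = (3*g (b2 z))•d - (3*g (b z))•d2 := by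
      intro g z
      apply opeq; intro h x
      have hf := famIV g h z x
      simp only [ContinuousLinearMap.smul_apply, ContinuousLinearMap.sub_apply,
        map_smul, map_sub, smul_eq_mul]
      linear_combination hf
    by_cases hda : ∃ t : 𝕜, a = t•p
    · obtain ⟨gam, hgam⟩ := hda
      have ha2v : a2 = (gam*gam)•p := by
        rw [ha2, hgam, smul_mul_assoc, mul_smul_comm, hp, smul_smul]
      have hb3r : b3 = (3*gam)•b2 - (3*(gam*gam))•b := by
        apply opeq; intro h x
        have hv := VIstar h x
        rw [hgam, ha2v] at hv
        have h0 : (3*h (b2 x)*gam - 3*h (b x)*(gam*gam) - h (b3 x)) • p = 0 := by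
          linear_combination (norm := module) hv
        have hs : 3*h (b2 x)*gam - 3*h (b x)*(gam*gam) - h (b3 x) = 0 :=
          (smul_eq_zero.mp h0).resolve_right hp0
        simp only [ContinuousLinearMap.smul_apply, ContinuousLinearMap.sub_apply,
          map_smul, map_sub, smul_eq_mul]
        linear_combination -hs
      by_cases hdd : ∃ t : 𝕜, d = t•pb
      · -- Sub4
        obtain ⟨del, hdel⟩ := hdd
        have hb2v : b2 = (gam+del)•b := by
          rw [W2, hgam, hdel, smul_mul_assoc, mul_smul_comm, Wpb, Wbpb, ← add_smul]
        have hd2v : d2 = (del*del)•pb := by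
          rw [hd2, hdel, smul_mul_assoc, mul_smul_comm, hpb, smul_smul]
        have hb3v2 : b3 = (gam*gam + gam*del + del*del)•b := by
          rw [WB3', hgam, hb2v, hd2v]
          simp only [mul_add, mul_sub, mul_smul_comm, smul_mul_assoc, Wpb, Wbpb]
          match_scalars <;> ring
        have key : ((gam-del)*(gam-del))•b = 0 := by
          have e := hb3v2.symm.trans hb3r
          rw [hb2v] at e
          linear_combination (norm := module) e
        have hgd : gam = del := by
          have h2 := (smul_eq_zero.mp key).resolve_right hb
          exact sub_eq_zero.mp (mul_self_eq_zero.mp h2)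
        apply quadId Q (2*gam)
        have hQv : Q = gam•p + b + gam•pb := by
          rw [WQ, hgam, hdel, hc, ← hgd, add_zero]
        have hQ2v : Q*Q = (gam*gam)•p + (2*gam)•b + (gam*gam)•pb := by
          rw [WQ2, ha2v, hb2v, hc2, hd2v, ← hgd]
          match_scalars <;> ring
        rw [hQ2v, hQv, ← hsum]
        match_scalars <;> ring
      · -- Sub2
        push_neg at hdd
        have hW2' : b2 = gam•b + b*d := by rw [W2, hgam, smul_mul_assoc, Wpb]
        have hb3bd : b3 = (3*gam)•(b*d) := by
          rw [hb3r, hW2']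
          match_scalars <;> ring
        obtain ⟨z0, g0, hg0⟩ := opex b hb
        set rho := g0 ((b*d) z0) with hrho
        have hdd2 : d*d = (gam+rho)•d - (gam*rho)•pb := by
          have hv := IVstar g0 z0
          rw [hb3bd, hd2, hW2'] at hv
          simp only [ContinuousLinearMap.smul_apply, ContinuousLinearMap.add_apply,
            map_smul, map_add, smul_eq_mul, hg0, ← hrho] at hv
          linear_combination (norm := module) ((3:𝕜)⁻¹) • hv
        have hbd : b*d = rho•b := by
          apply opeq; intro g z
          have hv := IVstar g z
          rw [hb3bd, hd2, hW2', hdd2] at hv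
          have hne : d - gam•pb ≠ 0 := sub_ne_zero.mpr (hdd gam)
          have h0 : (g ((b*d) z) - rho*g (b z))•(d - gam•pb) = 0 := by
            simp only [ContinuousLinearMap.smul_apply, ContinuousLinearMap.add_apply,
              map_smul, map_add, smul_eq_mul] at hv
            linear_combination (norm := module) (-(3:𝕜)⁻¹) • hv
          have hs := (smul_eq_zero.mp h0).resolve_right hne
          simp only [ContinuousLinearMap.smul_apply, map_smul, smul_eq_mul]
          linear_combination hs
        have hb3v2 : b3 = (gam*gam + gam*rho + rho*rho)•b := by
          rw [WB3', hgam, hd2, hdd2, hW2', hbd]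
          simp only [mul_add, mul_sub, mul_smul_comm, smul_mul_assoc, Wpb, Wbpb, hbd]
          match_scalars <;> ring
        have key : ((gam-rho)*(gam-rho))•b = 0 := by
          have e := hb3bd.symm.trans hb3v2
          rw [hbd] at e
          linear_combination (norm := module) -e
        have hgr : gam = rho := by
          have h2 := (smul_eq_zero.mp key).resolve_right hb
          exact sub_eq_zero.mp (mul_self_eq_zero.mp h2)
        apply quadId Q (2*gam)
        have hQv : Q = gam•p + b + d := by rw [WQ, hgam, hc, add_zero]
        have hQ2v : Q*Q = (gam*gam)•p + (2*gam)•b + ((2*gam)•d - (gam*gam)•pb) := by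
          rw [WQ2, ha2v, hW2', hbd, ← hgr, hc2, hd2, hdd2, ← hgr]
          match_scalars <;> ring
        rw [hQ2v, hQv, ← hsum]
        match_scalars <;> ring
    · -- not (a dep p)
      push_neg at hda
      obtain ⟨x0, h0f, hh0⟩ := opex b hb
      set alp := h0f (b2 x0) with halp
      set bet3 := h0f (b3 x0) with hbet3
      have F1 : a2 = alp•a - (bet3/3)•p := by
        have hv := VIstar h0f x0
        rw [hh0, ← halp, ← hbet3] at hv
        linear_combination (norm := module) (-(3:𝕜)⁻¹) • hv
      have X4 : ∀ s t : 𝕜, s•a = t•p → s = 0 ∧ t = 0 := by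
        intro s t hst
        by_cases hs : s = 0
        · refine ⟨hs, ?_⟩
          rw [hs, zero_smul] at hst
          exact ((smul_eq_zero.mp hst.symm).resolve_right hp0)
        · exact absurd (by rw [← smul_smul, ← hst, inv_smul_smul₀ hs] :
            a = (s⁻¹*t)•p) (hda (s⁻¹*t))
      have Fkey : ∀ (h : X →L[𝕜] 𝕜) (x : X),
          3*h (b2 x) - 3*alp*h (b x) = 0 ∧ h (b3 x) - bet3*h (b x) = 0 := by
        intro h x
        apply X4
        have hv := VIstar h x
        rw [F1] at hv
        linear_combination (norm := module) hv
      have F2 : b2 = alp•b := by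
        apply opeq; intro h x
        have := (Fkey h x).1
        simp only [ContinuousLinearMap.smul_apply, map_smul, smul_eq_mul]
        linear_combination ((1:𝕜)/3) * this
      have F3 : b3 = bet3•b := by
        apply opeq; intro h x
        have := (Fkey h x).2
        simp only [ContinuousLinearMap.smul_apply, map_smul, smul_eq_mul]
        linear_combination this
      have hsc : ∀ s t : 𝕜, s•b = t•b → s = t := fun s t hst => smul_cancel hb hst
      by_cases hdd : ∃ t : 𝕜, d = t•pb
      · -- Sub3
        obtain ⟨del, hdel⟩ := hdd
        have hbd : b*d = del•b := by rw [hdel, mul_smul_comm, Wbpb]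
        have hab : a*b = (alp-del)•b := by
          have e : a*b = b2 - b*d := eq_sub_of_add_eq W2.symm
          rw [e, F2, hbd, ← sub_smul]
        have hd2v : d2 = (del*del)•pb := by
          rw [hd2, hdel, smul_mul_assoc, mul_smul_comm, hpb, smul_smul]
        have hb3v2 : b3 = (alp*alp - alp*del + del*del)•b := by
          rw [WB3', F2, hd2v, mul_smul_comm, mul_smul_comm, hab, Wbpb]
          match_scalars <;> ring
        have e1 : bet3 = alp*alp - alp*del + del*del := hsc _ _ (F3.symm.trans hb3v2)
        have e2 : bet3 = 3*(alp*del) - 3*(del*del) := by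
          have hv := IVstar h0f x0
          rw [F3, F2, hdel, hd2v] at hv
          simp only [ContinuousLinearMap.smul_apply, map_smul, smul_eq_mul, hh0,
            mul_one] at hv
          refine smul_cancel hpb0 ?_
          linear_combination (norm := module) hv
        have ha2d : alp = 2*del := by
          have h2 : (alp - 2*del)*(alp - 2*del) = 0 := by linear_combination e2 - e1
          exact sub_eq_zero.mp (mul_self_eq_zero.mp h2)
        apply quadId Q alp
        have hbval : bet3/3 = alp^2/4 := by
          rw [ha2d] at e2 ⊢
          linear_combination ((1:𝕜)/3) * e2
        rw [hbval] at F1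
        have hQv : Q = a + b + del•pb := by rw [WQ, hdel, hc, add_zero]
        have hQ2v : Q*Q = (alp•a - (alp^2/4)•p) + alp•b + (del*del)•pb := by
          rw [WQ2, F1, F2, hc2, hd2v, add_zero]
        rw [hQ2v, hQv, ← hsum, ha2d]
        match_scalars <;> ring
      · -- Sub1
        push_neg at hdd
        have G1 : d2 = alp•d - (bet3/3)•pb := by
          have hv := IVstar h0f x0
          rw [← hbet3, ← halp, hh0] at hv
          linear_combination (norm := module) ((3:𝕜)⁻¹) • hv
        have hb3v2 : b3 = (alp*alp - bet3/3)•b := by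
          have hab2 : a*b + b*d = alp•b := by rw [← W2, F2]
          rw [WB3', F2, G1, mul_smul_comm, mul_sub, mul_smul_comm, mul_smul_comm, Wbpb]
          linear_combination (norm := module) alp • hab2
        have e1 : bet3 = alp*alp - bet3/3 := hsc _ _ (F3.symm.trans hb3v2)
        have hbval : bet3/3 = alp^2/4 := by linear_combination ((1:𝕜)/4) * e1
        rw [hbval] at F1 G1
        apply quadId Q alp
        have hQv : Q = a + b + d := by rw [WQ, hc, add_zero]
        rw [WQ2, F1, F2, hc2, G1, hQv, ← hsum]
        match_scalars <;> ring
  · -- c ≠ 0 branch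
    obtain ⟨zc, gc, hgc⟩ := opex c hc
    set lam := gb (b2 zb) with hlam
    have E1 : c2 = lam • c := by
      apply opeq; intro h x
      have hf := famII gb h zb x
      rw [hgb, one_mul] at hf
      simp only [ContinuousLinearMap.smul_apply, map_smul, smul_eq_mul]
      linear_combination -hf
    have E3 : b2 = lam • b := by
      apply opeq; intro h x
      have hf := famI gc h zc x
      rw [E1] at hf
      simp only [ContinuousLinearMap.smul_apply, map_smul, smul_eq_mul, hgc] at hf
      simp only [ContinuousLinearMap.smul_apply, map_smul, smul_eq_mul]
      linear_combination -hf
    set nu3 := gc (c3 zc) with hnu3_def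
    have E8 : a2 = lam • a - (nu3/3) • p := by
      apply opeq; intro h x
      have hf := famIII gc h zc x
      rw [E1, ← hnu3_def] at hf
      simp only [ContinuousLinearMap.smul_apply, map_smul, smul_eq_mul, hgc] at hf
      simp only [ContinuousLinearMap.sub_apply, ContinuousLinearMap.smul_apply, map_sub,
        map_smul, smul_eq_mul]
      linear_combination ((1:𝕜)/3) * hf
    set kap3 := gb (b3 zb) with hkap3_def
    have E9 : d2 = lam • d - (kap3/3) • pb := by
      apply opeq; intro h x
      have hf := famIV gb h zb x
      rw [hgb, ← hkap3_def, ← hlam] at hf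
      simp only [ContinuousLinearMap.sub_apply, ContinuousLinearMap.smul_apply, map_sub,
        map_smul, smul_eq_mul]
      linear_combination ((1:𝕜)/3) * hf
    have hb3v : b3 = (lam*lam - nu3/3) • b := by
      calc b3 = a2*b + b2*d := WB3
        _ = (lam•a - (nu3/3)•p)*b + (lam•b)*d := by rw [E8, E3]
        _ = lam•(a*b + b*d) - (nu3/3)•(p*b) := by
            simp only [sub_mul, smul_mul_assoc, smul_add]; module
        _ = lam•b2 - (nu3/3)•b := by rw [← W2, Wpb]
        _ = (lam*lam - nu3/3) • b := by rw [E3, smul_smul, ← sub_smul]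
    have hc3v : c3 = (lam*lam - kap3/3) • c := by
      calc c3 = c2*a + d2*c := WC3
        _ = (lam•c)*a + (lam•d - (kap3/3)•pb)*c := by rw [E1, E9]
        _ = lam•(c*a + d*c) - (kap3/3)•(pb*c) := by
            simp only [sub_mul, smul_mul_assoc, smul_add]; module
        _ = lam•c2 - (kap3/3)•c := by rw [← W3, Wpbc]
        _ = (lam*lam - kap3/3) • c := by rw [E1, smul_smul, ← sub_smul]
    have Eq1 : kap3 = lam*lam - nu3/3 := by
      rw [hkap3_def, hb3v]
      simp only [ContinuousLinearMap.smul_apply, map_smul, smul_eq_mul, hgb, mul_one]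
    have Eq2 : nu3 = lam*lam - kap3/3 := by
      rw [hnu3_def, hc3v]
      simp only [ContinuousLinearMap.smul_apply, map_smul, smul_eq_mul, hgc, mul_one]
    have hnu : nu3/3 = lam^2/4 := by linear_combination (-(1:𝕜)/8)*Eq1 + (3/8)*Eq2
    have hkap : kap3/3 = lam^2/4 := by linear_combination (3/8)*Eq1 + (-(1:𝕜)/8)*Eq2
    rw [hnu] at E8
    rw [hkap] at E9
    apply quadId Q lam
    calc Q*Q = a2 + b2 + c2 + d2 := WQ2
      _ = (lam•a - (lam^2/4)•p) + lam•b + lam•c + (lam•d - (lam^2/4)•pb) := by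
          rw [E8, E3, E1, E9]
      _ = lam•(a+b+c+d) - (lam^2/4)•(p+pb) := by module
      _ = lam•Q - (lam^2/4)•(1 : X →L[𝕜] X) := by rw [← WQ, hsum]

end Core

section Ring
variable {R : Type*} [Ring R]

lemma idem3 (A P : R) (hP : P*P = P) : bracket3 A P = bracket1 A P := by
  have hP2 : ∀ x : R, P*(P*x) = P*x := fun x => by rw [← mul_assoc, hP]
  simp only [bracket3, bracket1, mul_sub, sub_mul, mul_assoc, hP, hP2]
  abel

lemma corner1 (A P : R) (hP : P*P = P) : P * bracket1 A P * P = 0 := by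
  have hP2 : ∀ x : R, P*(P*x) = P*x := fun x => by rw [← mul_assoc, hP]
  simp only [bracket1, mul_sub, sub_mul, mul_assoc, hP, hP2]
  abel

lemma corner2 (A P : R) (hP : P*P = P) : (1-P) * bracket1 A P * (1-P) = 0 := by
  have hP2 : ∀ x : R, P*(P*x) = P*x := fun x => by rw [← mul_assoc, hP]
  simp only [bracket1, mul_sub, sub_mul, mul_assoc, mul_one, one_mul, hP, hP2]
  abel

end Ring

section Nilp
variable {𝕜 X : Type*} [RCLike 𝕜] [NormedAddCommGroup X] [NormedSpace 𝕜 X]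

lemma nilp3 (Q : X →L[𝕜] X) (μ : 𝕜) (h : (Q - μ•1)*(Q - μ•1) = 0) :
    ∀ T : X →L[𝕜] X, bracket3 T Q = 0 := by
  intro T
  set M : X →L[𝕜] X := Q - μ•1 with hM
  have hQM : ∀ S : X →L[𝕜] X, bracket1 S Q = bracket1 S M := by
    intro S
    simp only [bracket1, hM, mul_sub, sub_mul, mul_smul_comm, smul_mul_assoc,
      mul_one, one_mul]
    abel
  have hstep : bracket3 T Q = bracket3 T M := by
    simp only [bracket3, hQM]
  rw [hstep]
  have expand : bracket3 T M = T*((M*M)*M)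
      - (M*(T*(M*M)) + M*(T*(M*M)) + M*(T*(M*M)))
      + ((M*M)*(T*M) + (M*M)*(T*M) + (M*M)*(T*M)) - (M*M)*(M*T) := by
    simp only [bracket3, bracket1]
    noncomm_ring
  rw [expand, h]
  simp

lemma rankone_fd (g : X →L[𝕜] 𝕜) (v : X) :
    FiniteDimensional 𝕜 (LinearMap.range (g.smulRight v : X →ₗ[𝕜] X)) := by
  have hle : LinearMap.range (g.smulRight v : X →ₗ[𝕜] X) ≤ (𝕜 ∙ v) := by
    rintro y ⟨x, rfl⟩
    exact Submodule.smul_mem _ _ (Submodule.mem_span_singleton_self v)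
  exact Submodule.finiteDimensional_of_le hle

end Nilp

theorem stmt_13 {𝕜 X : Type*} [RCLike 𝕜] [NormedAddCommGroup X] [NormedSpace 𝕜 X]
    [CompleteSpace X] (hdim : 2 ≤ Module.rank 𝕜 X)
    (𝒜 : Subalgebra 𝕜 (X →L[𝕜] X)) (h𝒜 : IsStandardOperatorAlgebra 𝕜 X 𝒜)
    (Φ : 𝒜 → 𝒜) (hsurj : Function.Surjective Φ)
    (hpres : ∀ A B : 𝒜, bracket3 (Φ A) (Φ B) = bracket3 A B)
    (P : 𝒜) (hP : P * P = P) (hP0 : P ≠ 0) (hP1 : P ≠ 1) :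
    P * Φ P * ((1 : 𝒜) - P) = 0 ∧ ((1 : 𝒜) - P) * Φ P * P = 0 := by
  classical
  set p : X →L[𝕜] X := (P : X →L[𝕜] X) with hp_def
  set pb : X →L[𝕜] X := 1 - p with hpb_def
  set Qop : X →L[𝕜] X := ((Φ P : 𝒜) : X →L[𝕜] X) with hQ_def
  have hpE : p * p = p := by
    have := congrArg (fun A : 𝒜 => (A : X →L[𝕜] X)) hP
    simpa using this
  have hpbE : pb * pb = pb := by
    rw [hpb_def, sub_mul, one_mul, mul_sub, mul_one, hpE]
    abel
  have hsumE : p + pb = 1 := by rw [hpb_def]; abel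
  have hp0E : p ≠ 0 := by
    intro h
    rw [hp_def] at h
    exact hP0 (by exact_mod_cast h)
  have hpb0E : pb ≠ 0 := by
    intro h
    apply hP1
    have h1 : (1:X →L[𝕜] X) - p = 0 := h
    have h2 : p = 1 := (sub_eq_zero.mp h1).symm
    rw [hp_def] at h2
    exact_mod_cast h2
  -- the corner conditions
  have Hcorner : ∀ T : X →L[𝕜] X, FiniteDimensional 𝕜 (LinearMap.range (T : X →ₗ[𝕜] X)) →
      p * bracket3 T Qop * p = 0 ∧ pb * bracket3 T Qop * pb = 0 := by
    intro T hT
    obtain ⟨A, hA⟩ := hsurj ⟨T, h𝒜 T hT⟩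
    have hkey : bracket3 (⟨T, h𝒜 T hT⟩ : 𝒜) (Φ P) = bracket1 A P := by
      rw [← hA, hpres, idem3 _ _ hP]
    have hcoe : bracket3 T Qop = ((bracket1 A P : 𝒜) : X →L[𝕜] X) := by
      have := congrArg (fun B : 𝒜 => (B : X →L[𝕜] X)) hkey
      simpa [bracket3, bracket1] using this
    constructor
    · have h1 : P * bracket1 A P * P = 0 := corner1 A P hP
      have h2 := congrArg (fun B : 𝒜 => (B : X →L[𝕜] X)) h1
      rw [hcoe]
      push_cast at h2 ⊢
      exact h2
    · have h1 : (1-P) * bracket1 A P * (1-P) = 0 := corner2 A P hP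
      have h2 := congrArg (fun B : 𝒜 => (B : X →L[𝕜] X)) h1
      rw [hcoe, hpb_def]
      push_cast at h2 ⊢
      exact h2
  -- pointwise idempotency lemmas
  have hppbE : p * pb = 0 := by rw [hpb_def, mul_sub, mul_one, hpE, sub_self]
  have hpbpE : pb * p = 0 := by rw [hpb_def, sub_mul, one_mul, hpE, sub_self]
  have hppbx : ∀ x : X, p (pb x) = 0 := by
    intro x
    rw [← ContinuousLinearMap.mul_apply, hppbE, ContinuousLinearMap.zero_apply]
  have hpbpx : ∀ x : X, pb (p x) = 0 := by
    intro x
    rw [← ContinuousLinearMap.mul_apply, hpbpE, ContinuousLinearMap.zero_apply]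
  have hppx : ∀ x : X, p (p x) = p x := by
    intro x
    rw [← ContinuousLinearMap.mul_apply, hpE]
  have hpbpbx : ∀ x : X, pb (pb x) = pb x := by
    intro x
    rw [← ContinuousLinearMap.mul_apply, hpbE]
  -- the scalar master identity
  have SM : ∀ e : X →L[𝕜] X, (∀ T : X →L[𝕜] X, FiniteDimensional 𝕜 (LinearMap.range (T : X →ₗ[𝕜] X)) →
        e * bracket3 T Qop * e = 0) →
      ∀ (φ h : X →L[𝕜] 𝕜) (z v : X),
        φ ((Qop^3*e) z) * h (e v) - 3*(φ ((Qop^2*e) z) * h ((e*Qop) v))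
          + 3*(φ ((Qop*e) z) * h ((e*Qop^2) v)) - φ (e z) * h ((e*Qop^3) v) = 0 := by
    intro e He φ h z v
    have h0 := He (φ.smulRight v) (rankone_fd φ v)
    have hexp : e * bracket3 (φ.smulRight v) Qop * e
        = e*((φ.smulRight v)*(Qop^3*e))
          - (e*(Qop*((φ.smulRight v)*(Qop^2*e))) + e*(Qop*((φ.smulRight v)*(Qop^2*e)))
             + e*(Qop*((φ.smulRight v)*(Qop^2*e))))
          + (e*(Qop^2*((φ.smulRight v)*(Qop*e))) + e*(Qop^2*((φ.smulRight v)*(Qop*e)))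
             + e*(Qop^2*((φ.smulRight v)*(Qop*e))))
          - e*(Qop^3*((φ.smulRight v)*e)) := by
      simp only [bracket3, bracket1]
      noncomm_ring
    rw [hexp] at h0
    have h1 := congrArg (fun M : X →L[𝕜] X => h (M z)) h0
    simp only [ContinuousLinearMap.sub_apply, ContinuousLinearMap.add_apply,
      ContinuousLinearMap.mul_apply, ContinuousLinearMap.smulRight_apply,
      ContinuousLinearMap.zero_apply, map_sub, map_add, map_smul, map_zero,
      smul_eq_mul] at h1
    simp only [ContinuousLinearMap.mul_apply]
    linear_combination h1
  have SMp := SM p (fun T hT => (Hcorner T hT).1)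
  have SMpb := SM pb (fun T hT => (Hcorner T hT).2)
  -- the six families
  have famI : ∀ (g h : X →L[𝕜] 𝕜) (z x : X),
      g ((pb*Qop^2*p) z) * h ((p*Qop*pb) x) = g ((pb*Qop*p) z) * h ((p*Qop^2*pb) x) := by
    intro g h z x
    have hs := SMp (g.comp pb) h z (pb x)
    simp only [ContinuousLinearMap.comp_apply, ContinuousLinearMap.mul_apply,
      hppbx, hpbpx, hppx, hpbpbx, map_zero, mul_zero, zero_mul, sub_zero, zero_sub,
      zero_add, add_zero] at hs
    simp only [ContinuousLinearMap.mul_apply]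
    linear_combination (-(1:𝕜)/3) * hs
  have famII : ∀ (g h : X →L[𝕜] 𝕜) (z x : X),
      g ((p*Qop^2*pb) z) * h ((pb*Qop*p) x) = g ((p*Qop*pb) z) * h ((pb*Qop^2*p) x) := by
    intro g h z x
    have hs := SMpb (g.comp p) h z (p x)
    simp only [ContinuousLinearMap.comp_apply, ContinuousLinearMap.mul_apply,
      hppbx, hpbpx, hppx, hpbpbx, map_zero, mul_zero, zero_mul, sub_zero, zero_sub,
      zero_add, add_zero] at hs
    simp only [ContinuousLinearMap.mul_apply]
    linear_combination (-(1:𝕜)/3) * hs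
  have famIII : ∀ (g h : X →L[𝕜] 𝕜) (z x : X),
      g ((pb*Qop^3*p) z) * h (p x)
        = 3*(g ((pb*Qop^2*p) z) * h ((p*Qop*p) x))
          - 3*(g ((pb*Qop*p) z) * h ((p*Qop^2*p) x)) := by
    intro g h z x
    have hs := SMp (g.comp pb) h z (p x)
    simp only [ContinuousLinearMap.comp_apply, ContinuousLinearMap.mul_apply,
      hppbx, hpbpx, hppx, hpbpbx, map_zero, mul_zero, zero_mul, sub_zero, zero_sub,
      zero_add, add_zero] at hs
    simp only [ContinuousLinearMap.mul_apply]
    linear_combination hs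
  have famIV : ∀ (g h : X →L[𝕜] 𝕜) (z x : X),
      g ((p*Qop^3*pb) z) * h (pb x)
        = 3*(g ((p*Qop^2*pb) z) * h ((pb*Qop*pb) x))
          - 3*(g ((p*Qop*pb) z) * h ((pb*Qop^2*pb) x)) := by
    intro g h z x
    have hs := SMpb (g.comp p) h z (pb x)
    simp only [ContinuousLinearMap.comp_apply, ContinuousLinearMap.mul_apply,
      hppbx, hpbpx, hppx, hpbpbx, map_zero, mul_zero, zero_mul, sub_zero, zero_sub,
      zero_add, add_zero] at hs
    simp only [ContinuousLinearMap.mul_apply]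
    linear_combination hs
  have famVI : ∀ (g h : X →L[𝕜] 𝕜) (z x : X),
      3*(g ((p*Qop*p) z) * h ((p*Qop^2*pb) x))
        = 3*(g ((p*Qop^2*p) z) * h ((p*Qop*pb) x)) + g (p z) * h ((p*Qop^3*pb) x) := by
    intro g h z x
    have hs := SMp (g.comp p) h z (pb x)
    simp only [ContinuousLinearMap.comp_apply, ContinuousLinearMap.mul_apply,
      hppbx, hpbpx, hppx, hpbpbx, map_zero, mul_zero, zero_mul, sub_zero, zero_sub,
      zero_add, add_zero] at hs
    simp only [ContinuousLinearMap.mul_apply]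
    linear_combination hs
  have famVI' : ∀ (g h : X →L[𝕜] 𝕜) (z x : X),
      3*(g ((pb*Qop*pb) z) * h ((pb*Qop^2*p) x))
        = 3*(g ((pb*Qop^2*pb) z) * h ((pb*Qop*p) x)) + g (pb z) * h ((pb*Qop^3*p) x) := by
    intro g h z x
    have hs := SMpb (g.comp pb) h z (p x)
    simp only [ContinuousLinearMap.comp_apply, ContinuousLinearMap.mul_apply,
      hppbx, hpbpx, hppx, hpbpbx, map_zero, mul_zero, zero_mul, sub_zero, zero_sub,
      zero_add, add_zero] at hs
    simp only [ContinuousLinearMap.mul_apply]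
    linear_combination hs
  -- degenerate case yields a contradiction
  have hdeg : ∀ μ : 𝕜, (Qop - μ•(1 : X →L[𝕜] X))*(Qop - μ•1) = 0 → False := by
    intro μ hμ
    have hQ30 := nilp3 Qop μ hμ
    have hcomm : ∀ (g : X →L[𝕜] 𝕜) (v y : X), g (p y) • v = g y • (p v) := by
      intro g v y
      have hBmem : g.smulRight v ∈ 𝒜 := h𝒜 _ (rankone_fd g v)
      have h1 : bracket3 (⟨g.smulRight v, hBmem⟩ : 𝒜) P = 0 := by
        have h2 := hpres (⟨g.smulRight v, hBmem⟩ : 𝒜) P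
        have h3 : ((bracket3 (⟨g.smulRight v, hBmem⟩ : 𝒜) P : 𝒜) : X →L[𝕜] X) = 0 := by
          rw [← h2]
          have h4 : ((bracket3 (Φ (⟨g.smulRight v, hBmem⟩ : 𝒜)) (Φ P) : 𝒜) : X →L[𝕜] X)
              = bracket3 ((Φ (⟨g.smulRight v, hBmem⟩ : 𝒜) : 𝒜) : X →L[𝕜] X) Qop := by
            simp [bracket3, bracket1, hQ_def]
          rw [h4, hQ30]
        exact_mod_cast h3
      have h5 : bracket1 (g.smulRight v) p = 0 := by
        rw [← idem3 _ _ hpE]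
        have h6 := congrArg (fun B : 𝒜 => (B : X →L[𝕜] X)) h1
        simpa [bracket3, bracket1] using h6
      replace h5 : (g.smulRight v) * p - p * (g.smulRight v) = 0 := h5
      have h7 : ((g.smulRight v) * p) y = (p * (g.smulRight v)) y := by
        rw [sub_eq_zero.mp h5]
      simpa [ContinuousLinearMap.mul_apply, ContinuousLinearMap.smulRight_apply,
        map_smul] using h7
    have hex0 : ∃ x0, p x0 ≠ 0 := by
      by_contra hno
      push_neg at hno
      exact hp0E (by ext y; simpa using hno y)
    obtain ⟨x0, hx0⟩ := hex0
    have hx0ne : x0 ≠ 0 := fun h => hx0 (by rw [h, map_zero])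
    obtain ⟨g0, hg0⟩ := SeparatingDual.exists_eq_one (R := 𝕜) hx0
    have hstar := hcomm g0 x0 x0
    rw [hg0, one_smul] at hstar
    set t := g0 x0 with ht
    have ht0 : t ≠ 0 := by
      intro h
      rw [h, zero_smul] at hstar
      exact hx0 (by rw [hstar, map_zero])
    have hpx0 : p x0 = t⁻¹ • x0 := by
      have h8 : t⁻¹ • x0 = p x0 := by
        conv_lhs => rw [hstar]
        rw [inv_smul_smul₀ ht0]
      exact h8.symm
    have hpy : ∀ y, p y = t⁻¹ • y := by
      intro y
      have hall : ∀ g : X →L[𝕜] 𝕜, g (p y - t⁻¹ • y) = 0 := by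
        intro g
        have h7 := hcomm g x0 y
        rw [hpx0, smul_smul] at h7
        have h8 : (g (p y) - g y * t⁻¹) • x0 = 0 := by
          rw [sub_smul, h7, sub_self]
        have h9 := (smul_eq_zero.mp h8).resolve_right hx0ne
        simp only [map_sub, map_smul, smul_eq_mul]
        linear_combination h9
      have h10 : p y - t⁻¹ • y = 0 := by
        by_contra hne
        obtain ⟨g, hg⟩ := SeparatingDual.exists_eq_one (R := 𝕜) hne
        rw [hall g] at hg
        exact one_ne_zero hg.symm
      exact sub_eq_zero.mp h10
    have h11 : (t⁻¹ * t⁻¹) • x0 = t⁻¹ • x0 := by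
      have hid := hppx x0
      rw [hpy x0, map_smul, hpy x0, smul_smul] at hid
      exact hid
    have h12 : t⁻¹ * t⁻¹ = t⁻¹ := smul_cancel hx0ne h11
    have h13 : t⁻¹ = 1 := mul_left_cancel₀ (inv_ne_zero ht0) (h12.trans (mul_one t⁻¹).symm)
    apply hpb0E
    ext y
    rw [hpb_def]
    simp [hpy y, h13]
  by_cases hb0 : p*Qop*pb = 0
  · by_cases hc0 : pb*Qop*p = 0
    · constructor
      · apply Subtype.ext
        push_cast
        exact hb0
      · apply Subtype.ext
        push_cast
        exact hc0
    · exfalso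
      obtain ⟨μ, hμ⟩ := core pb p Qop (by rw [add_comm]; exact hsumE) hpbE hpE hpb0E hp0E
        famII famI famIV famIII famVI' hc0
      exact hdeg μ hμ
  · exfalso
    obtain ⟨μ, hμ⟩ := core p pb Qop hsumE hpE hpbE hp0E hpb0E
      famI famII famIII famIV famVI hb0
    exact hdeg μ hμ
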